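/- Let n ≥ 3 and let λ_1,…,λ_n be reals with λ_1 ≥ ⋯ ≥ λ_n > 0, none of the λ_i an integer, and λ := λ_1+⋯+λ_n ∉ ℤ. With d defined as below: for every 0 ≤ k ≤ ⌈λ_n⌉ one has d(k) = C(k+n−2, n−2); that is, the multiplicity spaces of levels 0 through ⌈λ_n⌉ in M_{λ_1} ⊗ ⋯ ⊗ M_{λ_n} are positive definite. -/

import Mathlib

open scoped Classical

/-- `fsig λ k` is the coefficient of `e^{λ-2k}` in the signature character of the
Verma module `M_λ` evaluated at `s = -1`. -/
noncomputable def fsig (lam : ℝ) (k : ℤ) : ℤ :=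
  if k < 0 then 0
  else if lam < 0 then (-1) ^ k.toNat
  else if k ≤ ⌊lam⌋ then 1
  else (-1) ^ (k + ⌈lam⌉).toNat

/-- `convSig n lam k = Σ_{k₁+⋯+k_n = k} ∏_i f_{λ_i}(k_i)`, the coefficient of
`e^{λ−2k}` in the product of signature characters at `s = −1`. -/
noncomputable def convSig (n : ℕ) (lam : Fin n → ℝ) (k : ℕ) : ℤ :=
  ∑ x ∈ Finset.Nat.antidiagonalTuple n k, ∏ i, fsig (lam i) (x i)

lemma fsig_one (lam : ℝ) (k : ℤ) (hl : 0 < lam) (h0 : 0 ≤ k) (hk : k ≤ ⌈lam⌉) :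
    fsig lam k = 1 := by
  unfold fsig
  rw [if_neg (by omega), if_neg (by push_neg; positivity)]
  by_cases h : k ≤ ⌊lam⌋
  · rw [if_pos h]
  · rw [if_neg h]
    have hfc : ⌈lam⌉ ≤ ⌊lam⌋ + 1 := Int.ceil_le_floor_add_one lam
    have hkc : k = ⌈lam⌉ := by omega
    have hcpos : 0 < ⌈lam⌉ := Int.ceil_pos.2 hl
    have : Even (k + ⌈lam⌉).toNat := ⟨⌈lam⌉.toNat, by omega⟩
    exact this.neg_one_pow

lemma card_adt (n k : ℕ) (hn : 1 ≤ n) :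
    (Finset.Nat.antidiagonalTuple n k).card = (n + k - 1).choose (n - 1) := by
  rw [← Finset.piAntidiag_univ_fin_eq_antidiagonalTuple k n,
    ← Finset.map_sym_eq_piAntidiag, Finset.card_map, Finset.sym_univ,
    ← Fintype.card, Sym.card_sym_eq_choose, Fintype.card_fin]
  have h1 : k ≤ n + k - 1 := by omega
  have h2 : n + k - 1 - k = n - 1 := by omega
  rw [← Nat.choose_symm h1, h2]

lemma hockey (p : ℕ) : ∀ k : ℕ,
    ∑ m ∈ Finset.range (k + 1), (m + p).choose p = (k + p + 1).choose (p + 1) := by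
  intro k
  induction k with
  | zero => simp
  | succ k ih =>
    rw [Finset.sum_range_succ, ih]
    have : k + 1 + p + 1 = (k + p + 1) + 1 := by omega
    rw [this, Nat.choose_succ_succ (k + p + 1) p, Nat.succ_eq_add_one,
      show k + 1 + p = k + p + 1 by omega]
    omega

/-- first assertion of Case 6 of Theorem 1.1: all highest weights
positive; the multiplicity spaces of levels `0` through `⌈λ_n⌉` are positive definite. -/
theorem stmt_18 (n : ℕ) (hn : 3 ≤ n) (lam : Fin n → ℝ) (hanti : Antitone lam)
    (hpos : ∀ i : Fin n, 0 < lam i)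
    (hgen : ∀ (i : Fin n) (z : ℤ), lam i ≠ z)
    (hsumZ : ∀ z : ℤ, (∑ i, lam i) ≠ z)
    (d : ℕ → ℤ)
    (hd : ∀ k : ℕ, d k = convSig n lam k -
      ∑ m ∈ Finset.range k, d m * fsig ((∑ i, lam i) - 2 * m) ((k : ℤ) - m)) :
    ∀ k : ℕ, (k : ℤ) ≤ ⌈lam ⟨n - 1, by omega⟩⌉ →
      d k = ((k + n - 2).choose (n - 2) : ℤ) := by
  set L : ℝ := ∑ i, lam i with hL
  set i0 : Fin n := ⟨n - 1, by omega⟩ with hi0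
  set c : ℤ := ⌈lam i0⌉ with hc
  have hcpos : 0 < c := Int.ceil_pos.2 (hpos i0)
  have hmin : ∀ i : Fin n, lam i0 ≤ lam i := by
    intro i
    exact hanti (by simp [hi0, Fin.le_def]; omega)
  have hceil : ∀ i : Fin n, c ≤ ⌈lam i⌉ := fun i => Int.ceil_le_ceil (hmin i)
  have hL3 : 3 * (lam i0) ≤ L := by
    have : (n : ℝ) * lam i0 ≤ L := by
      rw [hL]
      calc (n : ℝ) * lam i0 = ∑ _i : Fin n, lam i0 := by
            rw [Finset.sum_const, Finset.card_univ, Fintype.card_fin, nsmul_eq_mul]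
          _ ≤ ∑ i, lam i := Finset.sum_le_sum fun i _ => hmin i
    have hn3 : (3 : ℝ) ≤ (n : ℝ) := by exact_mod_cast hn
    nlinarith [hpos i0]
  have hlamlt : (c : ℝ) - 1 < lam i0 := by
    have := Int.ceil_lt_add_one (lam i0)
    linarith
  have hLlow : (3 : ℝ) * c - 3 < L := by linarith
  have hLceil : 3 * c - 2 ≤ ⌈L⌉ := by
    have h1 : ((3 * c - 3 : ℤ) : ℝ) < L := by push_cast; linarith
    have := Int.lt_ceil.2 h1
    omega
  -- strong induction
  intro k
  induction k using Nat.strong_induction_on with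
  | _ k ih =>
    intro hk
    -- convSig equals the number of tuples
    have hconv : convSig n lam k = ((Finset.Nat.antidiagonalTuple n k).card : ℤ) := by
      unfold convSig
      rw [Finset.sum_congr rfl (fun x hx => ?_), Finset.sum_const, nsmul_eq_mul, mul_one]
      have hsum : ∑ i, x i = k := Finset.Nat.mem_antidiagonalTuple.mp hx
      refine Finset.prod_eq_one fun i _ => ?_
      refine fsig_one _ _ (hpos i) (by positivity) ?_
      have hxi : x i ≤ k := hsum ▸ Finset.single_le_sum (fun j _ => Nat.zero_le _)
        (Finset.mem_univ i)
      calc (x i : ℤ) ≤ (k : ℤ) := by exact_mod_cast hxi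
        _ ≤ c := hk
        _ ≤ ⌈lam i⌉ := hceil i
    -- each fsig in the recursion is 1
    have hfs : ∀ m ∈ Finset.range k, fsig (L - 2 * m) ((k : ℤ) - m) = 1 := by
      intro m hm
      rw [Finset.mem_range] at hm
      have hmc : (m : ℤ) ≤ c - 1 := by
        have : (m : ℤ) < (k : ℤ) := by exact_mod_cast hm
        omega
      have hLm : (0 : ℝ) < L - 2 * m := by
        have : ((m : ℤ) : ℝ) ≤ (c : ℝ) - 1 := by exact_mod_cast hmc
        push_cast at this ⊢
        linarith
      refine fsig_one _ _ hLm (by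
        have : (m : ℤ) < (k : ℤ) := by exact_mod_cast hm
        omega) ?_
      have hceq : ⌈L - 2 * (m : ℝ)⌉ = ⌈L⌉ - 2 * m := by
        rw [show L - 2 * (m : ℝ) = L - ((2 * m : ℤ) : ℝ) by push_cast; ring,
          Int.ceil_sub_intCast]
      rw [show (2 : ℝ) * (m : ℕ) = 2 * ((m : ℤ) : ℝ) by push_cast; ring] at hceq ⊢
      rw [hceq]
      have hkm : (k : ℤ) ≤ c := hk
      omega
    have hdm : ∀ m ∈ Finset.range k, d m = ((m + n - 2).choose (n - 2) : ℤ) := by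
      intro m hm
      rw [Finset.mem_range] at hm
      exact ih m hm (by
        have : (m : ℤ) < (k : ℤ) := by exact_mod_cast hm
        omega)
    rw [hd k, hconv, card_adt n k (by omega),
      Finset.sum_congr rfl (fun m hm => by rw [hfs m hm, hdm m hm, mul_one])]
    -- now pure arithmetic with binomials
    obtain ⟨p, rfl⟩ : ∃ p, n = p + 2 := ⟨n - 2, by omega⟩
    have h1 : p + 2 + k - 1 = k + p + 1 := by omega
    have h2 : p + 2 - 1 = p + 1 := by omega
    have h3 : ∀ m : ℕ, m + (p + 2) - 2 = m + p := fun m => by omega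
    rw [h1, h2, ← hockey p k, Finset.sum_range_succ]
    push_cast [h3]
    ring
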